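/- For d = 2, the ideal I of bivariate real polynomials vanishing at the three points (−1,−1), (−1,1), (1,−1) equals the ideal of ℝ[z₁,z₂] generated by the three polynomials ((1+z₁)/2)·((1+z₂)/2), ((1+z₁)/2)·((z₁+z₂)/2), and ((1+z₂)/2)·((z₁+z₂)/2). -/
import Mathlib


open MvPolynomial

/-- `((1+z₁)/2)·((1+z₂)/2)` -/
noncomputable def g₁ : MvPolynomial (Fin 2) ℝ :=
  (C (1 / 2 : ℝ) * (1 + X 0)) * (C (1 / 2 : ℝ) * (1 + X 1))

/-- `((1+z₁)/2)·((z₁+z₂)/2)` -/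
noncomputable def g₂ : MvPolynomial (Fin 2) ℝ :=
  (C (1 / 2 : ℝ) * (1 + X 0)) * (C (1 / 2 : ℝ) * (X 0 + X 1))

/-- `((1+z₂)/2)·((z₁+z₂)/2)` -/
noncomputable def g₃ : MvPolynomial (Fin 2) ℝ :=
  (C (1 / 2 : ℝ) * (1 + X 1)) * (C (1 / 2 : ℝ) * (X 0 + X 1))

private noncomputable abbrev Jspan : Ideal (MvPolynomial (Fin 2) ℝ) :=
  Ideal.span ({g₁, g₂, g₃} : Set (MvPolynomial (Fin 2) ℝ))

private lemma g1_mem : g₁ ∈ Jspan := Ideal.subset_span (by simp)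
private lemma g2_mem : g₂ ∈ Jspan := Ideal.subset_span (by simp)
private lemma g3_mem : g₃ ∈ Jspan := Ideal.subset_span (by simp)

private lemma h1_mem : (X 0 ^ 2 - 1 : MvPolynomial (Fin 2) ℝ) ∈ Jspan := by
  have h : (X 0 ^ 2 - 1 : MvPolynomial (Fin 2) ℝ) = C 4 * g₂ - C 4 * g₁ := by
    simp only [g₁, g₂]; ring_nf; norm_num [mul_assoc, ← C_mul, ← C_pow]; ring
  rw [h]
  exact Jspan.sub_mem (Jspan.mul_mem_left _ g2_mem) (Jspan.mul_mem_left _ g1_mem)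

private lemma h2_mem : (X 1 ^ 2 - 1 : MvPolynomial (Fin 2) ℝ) ∈ Jspan := by
  have h : (X 1 ^ 2 - 1 : MvPolynomial (Fin 2) ℝ) = C 4 * g₃ - C 4 * g₁ := by
    simp only [g₁, g₃]; ring_nf; norm_num [mul_assoc, ← C_mul, ← C_pow]; ring
  rw [h]
  exact Jspan.sub_mem (Jspan.mul_mem_left _ g3_mem) (Jspan.mul_mem_left _ g1_mem)

private lemma h3_mem : (X 0 * X 1 + 1 + X 0 + X 1 : MvPolynomial (Fin 2) ℝ) ∈ Jspan := by
  have h : (X 0 * X 1 + 1 + X 0 + X 1 : MvPolynomial (Fin 2) ℝ) = C 4 * g₁ := by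
    simp only [g₁]; ring_nf; norm_num [mul_assoc, ← C_mul, ← C_pow]; ring
  rw [h]
  exact Jspan.mul_mem_left _ g1_mem

private lemma reduce (p : MvPolynomial (Fin 2) ℝ) :
    ∃ a b c : ℝ, p - (C a + C b * X 0 + C c * X 1) ∈ Jspan := by
  induction p using MvPolynomial.induction_on with
  | C a => exact ⟨a, 0, 0, by simp⟩
  | add p q hp hq =>
      obtain ⟨a, b, c, hp⟩ := hp
      obtain ⟨a', b', c', hq⟩ := hq
      refine ⟨a + a', b + b', c + c', ?_⟩
      have := Jspan.add_mem hp hq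
      convert this using 1
      simp only [map_add]; ring
  | mul_X p i hp =>
      obtain ⟨a, b, c, hp⟩ := hp
      have hi : i = 0 ∨ i = 1 := by omega
      rcases hi with rfl | rfl
      · refine ⟨b - c, a - c, -c, ?_⟩
        have h := Jspan.add_mem (Jspan.add_mem (Jspan.mul_mem_right (X 0) hp)
          (Jspan.mul_mem_left (C b) h1_mem)) (Jspan.mul_mem_left (C c) h3_mem)
        convert h using 1
        simp only [map_sub, map_add, map_neg]; ring
      · refine ⟨c - b, -b, a - b, ?_⟩
        have h := Jspan.add_mem (Jspan.add_mem (Jspan.mul_mem_right (X 1) hp)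
          (Jspan.mul_mem_left (C c) h2_mem)) (Jspan.mul_mem_left (C b) h3_mem)
        convert h using 1
        simp only [map_sub, map_add, map_neg]; ring

private lemma eval_zero_of_mem {q : MvPolynomial (Fin 2) ℝ} (hq : q ∈ Jspan)
    (ε : Fin 2 → ℝ) (hε : ε ∈ ({![-1, -1], ![-1, 1], ![1, -1]} : Set (Fin 2 → ℝ))) :
    eval ε q = 0 := by
  have hle : Jspan ≤ RingHom.ker (eval ε) := by
    rw [Ideal.span_le]
    intro x hx
    simp only [Set.mem_insert_iff, Set.mem_singleton_iff] at hx hε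
    rcases hx with rfl | rfl | rfl <;> rcases hε with rfl | rfl | rfl <;>
      simp [RingHom.mem_ker, g₁, g₂, g₃]
  exact hle hq

/-- The ideal of bivariate real polynomials vanishing at `(-1,-1)`, `(-1,1)`, `(1,-1)`
equals the ideal generated by `g₁`, `g₂`, `g₃`. -/
theorem stmt_0 (p : MvPolynomial (Fin 2) ℝ) :
    (∀ ε : Fin 2 → ℝ, ε ∈ ({![-1, -1], ![-1, 1], ![1, -1]} : Set (Fin 2 → ℝ)) →
      eval ε p = 0) ↔ p ∈ Ideal.span ({g₁, g₂, g₃} : Set (MvPolynomial (Fin 2) ℝ)) := by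
  constructor
  · intro hvan
    obtain ⟨a, b, c, hmem⟩ := reduce p
    have hev : ∀ ε ∈ ({![-1, -1], ![-1, 1], ![1, -1]} : Set (Fin 2 → ℝ)),
        a + b * ε 0 + c * ε 1 = 0 := by
      intro ε hε
      have h0 := eval_zero_of_mem hmem ε hε
      have h1 := hvan ε hε
      simp only [map_sub, map_add, map_mul, eval_C, eval_X, h1] at h0
      linarith
    have e1 := hev ![-1, -1] (by simp)
    have e2 := hev ![-1, 1] (by simp)
    have e3 := hev ![1, -1] (by simp)
    simp only [Matrix.cons_val_zero, Matrix.cons_val_one, Matrix.head_cons] at e1 e2 e3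
    have ha : a = 0 := by linarith
    have hb : b = 0 := by linarith
    have hc : c = 0 := by linarith
    have : p = p - (C a + C b * X 0 + C c * X 1) := by
      rw [ha, hb, hc]; simp
    rw [this]
    exact hmem
  · intro hp ε hε
    exact eval_zero_of_mem hp ε hε
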